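/- Let T be a triangulated category and let a₁ : X₁ → X₀, a₂ : X₂ → X₁, a₃ : X₃ → X₂, a₄ : X₄ → X₃ be morphisms with a₁a₂ = 0, a₂a₃ = 0, a₃a₄ = 0, and suppose 0 ∈ ⟨a₁,a₂,a₃⟩ and 0 ∈ ⟨a₂,a₃,a₄⟩. Then the sets a₁ ∘ ⟨a₂, a₃, a₄⟩ and ⟨a₁, a₂, a₃⟩ ∘ Σa₄ in Hom(ΣX₄, X₀) agree up to a sign: there is a unit ε ∈ {±1} with a₁ ∘ ⟨a₂,a₃,a₄⟩ = ε · (⟨a₁,a₂,a₃⟩ ∘ Σa₄). -/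

import Mathlib

open CategoryTheory CategoryTheory.Limits CategoryTheory.Pretriangulated

variable {C : Type*} [Category C] [HasZeroObject C] [HasShift C ℤ] [Preadditive C]
  [∀ n : ℤ, (shiftFunctor C n).Additive] [Pretriangulated C]

/-- The Toda bracket `⟨a₁, a₂, a₃⟩ ⊆ Hom(ΣX₃, X₀)` associated to a cone of `a₂`. -/
def todaBracket {X₀ X₁ X₂ X₃ Cn : C} (a₁ : X₁ ⟶ X₀) (a₂ : X₂ ⟶ X₁) (a₃ : X₃ ⟶ X₂)
    (ι : X₁ ⟶ Cn) (δ : Cn ⟶ X₂⟦(1 : ℤ)⟧) : Set (X₃⟦(1 : ℤ)⟧ ⟶ X₀) :=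
  {f | ∃ (v : X₃⟦(1 : ℤ)⟧ ⟶ Cn) (u : Cn ⟶ X₀),
    v ≫ δ = a₃⟦(1 : ℤ)⟧' ∧ ι ≫ u = a₁ ∧ f = v ≫ u}

/-- Juggling formula: if `a₁a₂ = a₂a₃ = a₃a₄ = 0`, `0 ∈ ⟨a₁,a₂,a₃⟩` and `0 ∈ ⟨a₂,a₃,a₄⟩`,
then the subsets `a₁ ∘ ⟨a₂,a₃,a₄⟩` and `⟨a₁,a₂,a₃⟩ ∘ Σa₄` of `Hom(ΣX₄, X₀)` agree up to a
sign `ε ∈ {±1}`. -/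
theorem stmt12 {X₀ X₁ X₂ X₃ X₄ Cn Cn' : C}
    (a₁ : X₁ ⟶ X₀) (a₂ : X₂ ⟶ X₁) (a₃ : X₃ ⟶ X₂) (a₄ : X₄ ⟶ X₃)
    (ι : X₁ ⟶ Cn) (δ : Cn ⟶ X₂⟦(1 : ℤ)⟧) (ι' : X₂ ⟶ Cn') (δ' : Cn' ⟶ X₃⟦(1 : ℤ)⟧)
    (hT : Triangle.mk a₂ ι δ ∈ distTriang C)
    (hT' : Triangle.mk a₃ ι' δ' ∈ distTriang C)
    (h12 : a₂ ≫ a₁ = 0) (h23 : a₃ ≫ a₂ = 0) (h34 : a₄ ≫ a₃ = 0)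
    (h0 : (0 : X₃⟦(1 : ℤ)⟧ ⟶ X₀) ∈ todaBracket a₁ a₂ a₃ ι δ)
    (h0' : (0 : X₄⟦(1 : ℤ)⟧ ⟶ X₁) ∈ todaBracket a₂ a₃ a₄ ι' δ') :
    ∃ ε : ℤ, (ε = 1 ∨ ε = -1) ∧
      (fun g => g ≫ a₁) '' todaBracket a₂ a₃ a₄ ι' δ' =
        (fun g => ε • (a₄⟦(1 : ℤ)⟧' ≫ g)) '' todaBracket a₁ a₂ a₃ ι δ := by
  obtain ⟨v₁, u₁, hv₁, hu₁, hvu₁⟩ := h0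
  obtain ⟨v₀, u₀, hv₀, hu₀, hvu₀⟩ := h0'
  replace hvu₁ : v₁ ≫ u₁ = 0 := hvu₁.symm
  replace hvu₀ : v₀ ≫ u₀ = 0 := hvu₀.symm
  have hιδ : ι ≫ δ = 0 := comp_distTriang_mor_zero₂₃ _ hT
  have hιδ' : ι' ≫ δ' = 0 := comp_distTriang_mor_zero₂₃ _ hT'
  have h43 : a₄⟦(1 : ℤ)⟧' ≫ a₃⟦(1 : ℤ)⟧' = 0 := by
    rw [← Functor.map_comp, h34, Functor.map_zero]
  refine ⟨1, Or.inl rfl, ?_⟩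
  ext f
  simp only [Set.mem_image, one_smul]
  constructor
  · rintro ⟨g, ⟨v, u, hv, hu, rfl⟩, rfl⟩
    obtain ⟨w, hw⟩ : ∃ w : X₄⟦(1 : ℤ)⟧ ⟶ X₂, v - v₀ = w ≫ ι' :=
      Triangle.coyoneda_exact₃ _ hT' (v - v₀) (show (v - v₀) ≫ δ' = 0 by
        simp only [Preadditive.sub_comp, Triangle.mk_mor₃, hv, hv₀, sub_self])
    obtain ⟨t, ht⟩ : ∃ t : X₃⟦(1 : ℤ)⟧ ⟶ X₁, u - u₀ = δ' ≫ t :=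
      Triangle.yoneda_exact₃ _ hT' (u - u₀) (show ι' ≫ (u - u₀) = 0 by
        simp only [Preadditive.comp_sub, Triangle.mk_mor₂, hu, hu₀, sub_self])
    have hv' : v = v₀ + w ≫ ι' := by rw [← hw]; abel
    have hu' : u = u₀ + δ' ≫ t := by rw [← ht]; abel
    refine ⟨(v₁ + t ≫ ι) ≫ u₁, ⟨v₁ + t ≫ ι, u₁, ?_, hu₁, rfl⟩, ?_⟩
    · rw [Preadditive.add_comp, hv₁, Category.assoc, hιδ, comp_zero, add_zero]
    · show _ = _
      rw [hv', hu']
      simp only [Preadditive.add_comp, Preadditive.comp_add, Category.assoc,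
        reassoc_of% hvu₀, reassoc_of% hv₀, reassoc_of% hu₀, reassoc_of% hιδ',
        reassoc_of% hvu₁, reassoc_of% hu₁, hvu₁, hu₁,
        zero_comp, comp_zero, h12, add_zero, zero_add]
  · rintro ⟨g, ⟨v, u, hv, hu, rfl⟩, rfl⟩
    obtain ⟨w, hw⟩ : ∃ w : X₃⟦(1 : ℤ)⟧ ⟶ X₁, v - v₁ = w ≫ ι :=
      Triangle.coyoneda_exact₃ _ hT (v - v₁) (show (v - v₁) ≫ δ = 0 by
        simp only [Preadditive.sub_comp, Triangle.mk_mor₃, hv, hv₁, sub_self])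
    obtain ⟨s, hs⟩ : ∃ s : X₂⟦(1 : ℤ)⟧ ⟶ X₀, u - u₁ = δ ≫ s :=
      Triangle.yoneda_exact₃ _ hT (u - u₁) (show ι ≫ (u - u₁) = 0 by
        simp only [Preadditive.comp_sub, Triangle.mk_mor₂, hu, hu₁, sub_self])
    have hv' : v = v₁ + w ≫ ι := by rw [← hw]; abel
    have hu' : u = u₁ + δ ≫ s := by rw [← hs]; abel
    refine ⟨v₀ ≫ (u₀ + δ' ≫ w), ⟨v₀, u₀ + δ' ≫ w, hv₀, ?_, rfl⟩, ?_⟩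
    · rw [Preadditive.comp_add, hu₀, reassoc_of% hιδ', zero_comp, add_zero]
    · show _ = _
      rw [hv', hu']
      simp only [Preadditive.add_comp, Preadditive.comp_add, Category.assoc,
        reassoc_of% hvu₁, reassoc_of% hv₁, reassoc_of% hu₁, reassoc_of% hιδ,
        reassoc_of% hvu₀, reassoc_of% hv₀, hvu₀, hvu₁, hu₁,
        reassoc_of% h43, zero_comp, comp_zero, add_zero, zero_add]
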